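/- Let X be a convex subset of a real normed vector space and let F : X × X → ℝ satisfy: (A1) F is uniformly α-strongly convex in its second argument (for all x,y,z ∈ X, F(z,x) ≥ F(z,y) + ⟨∇₂F(z,y), x−y⟩ + (α/2)‖x−y‖²); (A3) ∇₂F is uniformly β-Lipschitz in its first argument (‖∇₂F(x,z) − ∇₂F(y,z)‖_* ≤ β‖x−y‖ for all x,y,z ∈ X). Set θ = β/α. Let (x_n) be the value-aggregation sequence: x₁ ∈ X and x_{n+1} ∈ argmin_{x∈X} Σ_{k=1}^n F(x_k, x), and for n ≥ 2 define S_n = (Σ_{k=1}^{n−1} ‖x_n − x_k‖)/(n−1). Then for all n ≥ 2, ‖x_{n+1} − x_n‖ ≤ θ S_n / n. -/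

import Mathlib

/-- Lemma: bound on consecutive iterates.
Under uniform `α`-strong convexity of `F` in the second argument and uniform
`β`-Lipschitzness of `∇₂F` in the first argument, with `θ = β/α`, the
Follow-the-Leader iterates satisfy `‖x_{n+1} − x_n‖ ≤ θ S_n / n` for `n ≥ 2`,
where `S_n = (Σ_{k=1}^{n−1} ‖x_n − x_k‖)/(n−1)`. -/
theorem stmt_4
    {E : Type*} [NormedAddCommGroup E] [NormedSpace ℝ E]
    (X : Set E) (hX : Convex ℝ X)
    (F : E → E → ℝ) (D2F : E → E → (E →L[ℝ] ℝ))
    (α β θ : ℝ) (hα : 0 < α) (hβ : 0 ≤ β) (hθ : θ = β / α)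
    (hgrad : ∀ z ∈ X, ∀ y ∈ X, HasFDerivWithinAt (F z) (D2F z y) X y)
    (hA1 : ∀ z ∈ X, ∀ y ∈ X, ∀ x ∈ X,
      F z x ≥ F z y + D2F z y (x - y) + α / 2 * ‖x - y‖ ^ 2)
    (hA3 : ∀ x ∈ X, ∀ y ∈ X, ∀ z ∈ X, ‖D2F x z - D2F y z‖ ≤ β * ‖x - y‖)
    (x : ℕ → E) (hmem : ∀ n, 1 ≤ n → x n ∈ X)
    (hftl : ∀ n, 1 ≤ n → ∀ y ∈ X,
      ∑ k ∈ Finset.Icc 1 n, F (x k) (x (n + 1)) ≤ ∑ k ∈ Finset.Icc 1 n, F (x k) y)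
    (S : ℕ → ℝ)
    (hS : ∀ n, 2 ≤ n →
      S n = (∑ k ∈ Finset.Icc 1 (n - 1), ‖x n - x k‖) / ((n : ℝ) - 1)) :
    ∀ n, 2 ≤ n → ‖x (n + 1) - x n‖ ≤ θ * S n / n := by
  intro n hn
  have hn1 : 1 ≤ n := by omega
  have hxn : x n ∈ X := hmem n hn1
  have hxn1 : x (n + 1) ∈ X := hmem (n + 1) (by omega)
  set d := x (n + 1) - x n with hd
  -- first-order optimality condition
  have opt : ∀ m, 1 ≤ m → ∀ y ∈ X,
      0 ≤ (∑ k ∈ Finset.Icc 1 m, D2F (x k) (x (m + 1))) (y - x (m + 1)) := by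
    intro m hm y hy
    have hxm1 : x (m + 1) ∈ X := hmem (m + 1) (by omega)
    have hder : HasFDerivWithinAt (fun z => ∑ k ∈ Finset.Icc 1 m, F (x k) z)
        (∑ k ∈ Finset.Icc 1 m, D2F (x k) (x (m + 1))) X (x (m + 1)) :=
      HasFDerivWithinAt.fun_sum fun k hk =>
        hgrad (x k) (hmem k (Finset.mem_Icc.mp hk).1) (x (m + 1)) hxm1
    have hmin : IsMinOn (fun z => ∑ k ∈ Finset.Icc 1 m, F (x k) z) X (x (m + 1)) :=
      isMinOn_iff.mpr fun z hz => hftl m hm z hz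
    have hcone : y - x (m + 1) ∈ posTangentConeAt X (x (m + 1)) :=
      sub_mem_posTangentConeAt_of_segment_subset (hX.segment_subset hxm1 hy)
    exact hmin.localize.hasFDerivWithinAt_nonneg hder hcone
  -- strong monotonicity term by term
  have mono : ∀ k ∈ Finset.Icc 1 n,
      α * ‖d‖ ^ 2 ≤ D2F (x k) (x (n + 1)) d - D2F (x k) (x n) d := by
    intro k hk
    have hxk : x k ∈ X := hmem k (Finset.mem_Icc.mp hk).1
    have h1 := hA1 (x k) hxk (x n) hxn (x (n + 1)) hxn1
    have h2 := hA1 (x k) hxk (x (n + 1)) hxn1 (x n) hxn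
    have e1 : x n - x (n + 1) = -d := by rw [hd]; abel
    rw [e1] at h2
    have e2 : (D2F (x k) (x (n + 1))) (-d) = -(D2F (x k) (x (n + 1))) d := map_neg _ _
    rw [e2, norm_neg] at h2
    have : F (x k) (x (n + 1)) = F (x k) (x n + d) := by rw [hd]; congr 1; abel
    nlinarith [h1, h2]
  -- sum it up
  have hcardn : (Finset.Icc 1 n).card = n := by rw [Nat.card_Icc]; omega
  have hsum_mono : (n : ℝ) * (α * ‖d‖ ^ 2) ≤
      (∑ k ∈ Finset.Icc 1 n, D2F (x k) (x (n + 1))) d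
        - (∑ k ∈ Finset.Icc 1 n, D2F (x k) (x n)) d := by
    have := Finset.sum_le_sum mono
    simp only [Finset.sum_const, hcardn, nsmul_eq_mul] at this
    simpa [ContinuousLinearMap.sum_apply, Finset.sum_sub_distrib] using this
  -- optimality of x_{n+1} for G_n
  have hA : (∑ k ∈ Finset.Icc 1 n, D2F (x k) (x (n + 1))) d ≤ 0 := by
    have h := opt n hn1 (x n) hxn
    have e : x n - x (n + 1) = -d := by rw [hd]; abel
    rw [e, map_neg] at h
    linarith
  -- optimality of x_n for G_{n-1}
  have hC : 0 ≤ (∑ k ∈ Finset.Icc 1 (n - 1), D2F (x k) (x n)) d := by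
    have hm : 1 ≤ n - 1 := by omega
    have h := opt (n - 1) hm (x (n + 1)) hxn1
    have e : n - 1 + 1 = n := by omega
    rw [e] at h
    exact h
  -- split the sum over Icc 1 n
  have hsplit : (∑ k ∈ Finset.Icc 1 n, D2F (x k) (x n)) d
      = (∑ k ∈ Finset.Icc 1 (n - 1), D2F (x k) (x n)) d + D2F (x n) (x n) d := by
    have e : n = (n - 1) + 1 := by omega
    rw [e, Finset.sum_Icc_succ_top (by omega : 1 ≤ n - 1 + 1)]
    simp [← e]
  -- Lipschitz bound on D2F (x n) (x n) d
  set T : ℝ := ∑ k ∈ Finset.Icc 1 (n - 1), ‖x n - x k‖ with hT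
  have hT0 : 0 ≤ T := Finset.sum_nonneg fun _ _ => norm_nonneg _
  have hlip : ∀ k ∈ Finset.Icc 1 (n - 1),
      D2F (x k) (x n) d - β * ‖x n - x k‖ * ‖d‖ ≤ D2F (x n) (x n) d := by
    intro k hk
    have hxk : x k ∈ X := hmem k (Finset.mem_Icc.mp hk).1
    have h3 := hA3 (x n) hxn (x k) hxk (x n) hxn
    have hb : ‖(D2F (x n) (x n) - D2F (x k) (x n)) d‖ ≤ β * ‖x n - x k‖ * ‖d‖ := by
      calc ‖(D2F (x n) (x n) - D2F (x k) (x n)) d‖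
          ≤ ‖D2F (x n) (x n) - D2F (x k) (x n)‖ * ‖d‖ :=
            ContinuousLinearMap.le_opNorm _ _
        _ ≤ β * ‖x n - x k‖ * ‖d‖ := by
            exact mul_le_mul_of_nonneg_right h3 (norm_nonneg _)
    have hb' : -(β * ‖x n - x k‖ * ‖d‖) ≤ (D2F (x n) (x n) - D2F (x k) (x n)) d :=
      neg_le_of_abs_le (by rwa [← Real.norm_eq_abs])
    have e : (D2F (x n) (x n) - D2F (x k) (x n)) d
        = D2F (x n) (x n) d - D2F (x k) (x n) d := rfl
    linarith [hb', e ▸ hb']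
  have hcardm : (Finset.Icc 1 (n - 1)).card = n - 1 := by rw [Nat.card_Icc]; omega
  have hlipsum : (∑ k ∈ Finset.Icc 1 (n - 1), D2F (x k) (x n)) d - β * T * ‖d‖
      ≤ ((n : ℝ) - 1) * D2F (x n) (x n) d := by
    have := Finset.sum_le_sum hlip
    simp only [Finset.sum_const, hcardm, nsmul_eq_mul, Finset.sum_sub_distrib,
      ← Finset.sum_mul, ← Finset.mul_sum] at this
    have hc : ((n - 1 : ℕ) : ℝ) = (n : ℝ) - 1 := by
      rw [Nat.cast_sub hn1, Nat.cast_one]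
    rw [hc] at this
    have e2 : ∑ k ∈ Finset.Icc 1 (n - 1), β * ‖x n - x k‖ * ‖d‖ = β * T * ‖d‖ := by
      rw [hT, ← Finset.sum_mul, ← Finset.mul_sum]
    rw [ContinuousLinearMap.sum_apply]
    linarith [this, e2]
  -- combine
  have hn1R : (0 : ℝ) < (n : ℝ) - 1 := by
    have : (2 : ℝ) ≤ (n : ℝ) := by exact_mod_cast hn
    linarith
  have hnR : (0 : ℝ) < (n : ℝ) := by linarith
  have hSn : S n = T / ((n : ℝ) - 1) := hS n hn
  have hSn0 : 0 ≤ S n := by rw [hSn]; positivity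
  have hg : -D2F (x n) (x n) d ≤ β * S n * ‖d‖ := by
    have h1 : -((n : ℝ) - 1) * D2F (x n) (x n) d ≤ β * T * ‖d‖ := by
      nlinarith [hlipsum, hC]
    have h2 : β * T * ‖d‖ = ((n : ℝ) - 1) * (β * S n * ‖d‖) := by
      rw [hSn]; field_simp
    nlinarith [h1, h2]
  have hmain : (n : ℝ) * α * ‖d‖ ^ 2 ≤ β * S n * ‖d‖ := by
    nlinarith [hsum_mono, hA, hC, hsplit, hg]
  -- conclude
  rcases eq_or_lt_of_le (norm_nonneg d) with hd0 | hd0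
  · rw [← hd0]
    have : 0 ≤ θ := hθ ▸ div_nonneg hβ hα.le
    positivity
  · have : ‖d‖ ≤ β * S n / ((n : ℝ) * α) := by
      rw [le_div_iff₀ (by positivity)]
      nlinarith [hmain]
    calc ‖d‖ ≤ β * S n / ((n : ℝ) * α) := this
      _ = θ * S n / n := by
          rw [hθ, div_mul_eq_mul_div, div_div, mul_comm α]
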